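/- Let T = {diag(e^t, e^{-t}) : t ∈ ℝ} ⊂ GL(2,ℝ), acting on even smooth functions on S¹ via the principal series action π_μ of parameter μ (realized on homogeneous functions of degree μ-1 on ℝ² \ {0}). Then the distribution v ↦ ∫_{S¹} v(x) |sin(2x)|^{(-1-μ)/2} dx on V_μ is T-invariant: for every g_t = diag(e^t, e^{-t}) and every smooth even v, ∫ (π_μ(g_t)v)(x)|sin 2x|^{(-1-μ)/2} dx = ∫ v(x)|sin 2x|^{(-1-μ)/2} dx. -/

import Mathlib

open Real MeasureTheory

namespace TInvAux

/-- Real part of `cosh t - sinh t * e^{-2ix}`. -/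
noncomputable def Rf (t x : ℝ) : ℝ := Real.cosh t - Real.sinh t * Real.cos (2 * x)

/-- Imaginary part of `cosh t - sinh t * e^{-2ix}`. -/
noncomputable def If (t x : ℝ) : ℝ := Real.sinh t * Real.sin (2 * x)

/-- The squared radius `e^{-2t} cos² x + e^{2t} sin² x`. -/
noncomputable def r2 (t x : ℝ) : ℝ := Real.cosh (2 * t) - Real.sinh (2 * t) * Real.cos (2 * x)

/-- The angle map. -/
noncomputable def phi (t x : ℝ) : ℝ := x + Real.arctan (If t x / Rf t x)

lemma Rf_pos (t x : ℝ) : 0 < Rf t x := by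
  have h1 := Real.cos_le_one (2 * x)
  have h2 := Real.neg_one_le_cos (2 * x)
  have h3 := Real.exp_pos t
  have h4 := Real.exp_pos (-t)
  simp only [Rf, Real.cosh_eq, Real.sinh_eq]
  nlinarith [mul_nonneg h3.le (sub_nonneg.mpr h1),
    mul_nonneg h4.le (by linarith : (0:ℝ) ≤ 1 + Real.cos (2 * x))]

lemma r2_pos (t x : ℝ) : 0 < r2 t x := by
  have h1 := Real.cos_le_one (2 * x)
  have h2 := Real.neg_one_le_cos (2 * x)
  have h3 := Real.exp_pos (2 * t)
  have h4 := Real.exp_pos (-(2 * t))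
  simp only [r2, Real.cosh_eq, Real.sinh_eq]
  nlinarith [mul_nonneg h3.le (sub_nonneg.mpr h1),
    mul_nonneg h4.le (by linarith : (0:ℝ) ≤ 1 + Real.cos (2 * x))]

lemma r2_eq (t x : ℝ) : r2 t x = Rf t x ^ 2 + If t x ^ 2 := by
  have h := Real.sin_sq_add_cos_sq (2 * x)
  simp only [r2, Rf, If, Real.cosh_two_mul, Real.sinh_two_mul]
  nlinarith [h]

lemma sqrt_one_add_sq (t x : ℝ) :
    Real.sqrt (1 + (If t x / Rf t x) ^ 2) = Real.sqrt (r2 t x) / Rf t x := by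
  have hR := Rf_pos t x
  have h1 : 1 + (If t x / Rf t x) ^ 2 = r2 t x / Rf t x ^ 2 := by
    rw [r2_eq]; field_simp
  rw [h1, Real.sqrt_div (r2_pos t x).le, Real.sqrt_sq hR.le]

lemma cos_phi (t x : ℝ) :
    Real.cos (phi t x) = Real.exp (-t) * Real.cos x / Real.sqrt (r2 t x) := by
  have hR := Rf_pos t x
  have hs : (0:ℝ) < Real.sqrt (r2 t x) := Real.sqrt_pos.mpr (r2_pos t x)
  rw [phi, Real.cos_add, Real.cos_arctan, Real.sin_arctan, sqrt_one_add_sq]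
  have key : Real.cos x * Rf t x - Real.sin x * If t x = Real.exp (-t) * Real.cos x := by
    have hpy := Real.sin_sq_add_cos_sq x
    have hcs : Real.cosh t - Real.sinh t = Real.exp (-t) := Real.cosh_sub_sinh t
    simp only [Rf, If, Real.cos_two_mul', Real.sin_two_mul]
    linear_combination Real.cos x * hcs - Real.sinh t * Real.cos x * hpy
  have hrw : Real.cos x * (1 / (Real.sqrt (r2 t x) / Rf t x)) -
      Real.sin x * (If t x / Rf t x / (Real.sqrt (r2 t x) / Rf t x)) =
      (Real.cos x * Rf t x - Real.sin x * If t x) / Real.sqrt (r2 t x) := by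
    field_simp
  rw [hrw, key]

lemma sin_phi (t x : ℝ) :
    Real.sin (phi t x) = Real.exp t * Real.sin x / Real.sqrt (r2 t x) := by
  have hR := Rf_pos t x
  have hs : (0:ℝ) < Real.sqrt (r2 t x) := Real.sqrt_pos.mpr (r2_pos t x)
  rw [phi, Real.sin_add, Real.cos_arctan, Real.sin_arctan, sqrt_one_add_sq]
  have key : Real.sin x * Rf t x + Real.cos x * If t x = Real.exp t * Real.sin x := by
    have hpy := Real.sin_sq_add_cos_sq x
    have hcs : Real.cosh t + Real.sinh t = Real.exp t := Real.cosh_add_sinh t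
    simp only [Rf, If, Real.cos_two_mul', Real.sin_two_mul]
    linear_combination Real.sin x * hcs + Real.sinh t * Real.sin x * hpy
  have hrw : Real.sin x * (1 / (Real.sqrt (r2 t x) / Rf t x)) +
      Real.cos x * (If t x / Rf t x / (Real.sqrt (r2 t x) / Rf t x)) =
      (Real.sin x * Rf t x + Real.cos x * If t x) / Real.sqrt (r2 t x) := by
    field_simp
  rw [hrw, key]

lemma hasDerivAt_phi (t x : ℝ) : HasDerivAt (phi t) (1 / r2 t x) x := by
  have hR := Rf_pos t x
  have hr2 := r2_pos t x
  have h2x : HasDerivAt (fun y : ℝ => 2 * y) 2 x := by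
    simpa using (hasDerivAt_id x).const_mul (2:ℝ)
  have hsin : HasDerivAt (fun y : ℝ => Real.sin (2 * y)) (Real.cos (2 * x) * 2) x :=
    (Real.hasDerivAt_sin (2 * x)).comp x h2x
  have hcos : HasDerivAt (fun y : ℝ => Real.cos (2 * y)) (-Real.sin (2 * x) * 2) x :=
    (Real.hasDerivAt_cos (2 * x)).comp x h2x
  have hI : HasDerivAt (fun y : ℝ => If t y) (Real.sinh t * (Real.cos (2 * x) * 2)) x :=
    hsin.const_mul (Real.sinh t)
  have hRd : HasDerivAt (fun y : ℝ => Rf t y) (-(Real.sinh t * (-Real.sin (2 * x) * 2))) x :=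
    (hcos.const_mul (Real.sinh t)).const_sub (Real.cosh t)
  have hg : HasDerivAt (fun y : ℝ => If t y / Rf t y)
      ((Real.sinh t * (Real.cos (2 * x) * 2) * Rf t x -
        If t x * -(Real.sinh t * (-Real.sin (2 * x) * 2))) / Rf t x ^ 2) x :=
    hI.div hRd hR.ne'
  have harct := (Real.hasDerivAt_arctan (If t x / Rf t x)).comp x hg
  have hphi := (hasDerivAt_id x).add harct
  refine hphi.congr_deriv ?_
  have h1g : 1 + (If t x / Rf t x) ^ 2 = r2 t x / Rf t x ^ 2 := by
    rw [r2_eq]; field_simp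
  have key : r2 t x + (Real.sinh t * (Real.cos (2 * x) * 2) * Rf t x -
      If t x * -(Real.sinh t * (-Real.sin (2 * x) * 2))) = 1 := by
    have hpy := Real.sin_sq_add_cos_sq (2 * x)
    have hc2 := Real.cosh_two_mul t
    have hs2 := Real.sinh_two_mul t
    have hsq := Real.cosh_sq t
    simp only [r2, Rf, If]
    linear_combination hc2 - Real.cos (2 * x) * hs2 - 2 * Real.sinh t ^ 2 * hpy + hsq
  have h2 : 1 + 1 / (1 + (If t x / Rf t x) ^ 2) *
      ((Real.sinh t * (Real.cos (2 * x) * 2) * Rf t x -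
        If t x * -(Real.sinh t * (-Real.sin (2 * x) * 2))) / Rf t x ^ 2) =
      (r2 t x + (Real.sinh t * (Real.cos (2 * x) * 2) * Rf t x -
        If t x * -(Real.sinh t * (-Real.sin (2 * x) * 2)))) / r2 t x := by
    rw [h1g]
    field_simp
  rw [h2, key]

lemma sin_two_phi (t x : ℝ) : Real.sin (2 * phi t x) = Real.sin (2 * x) / r2 t x := by
  have hr2 := r2_pos t x
  have hs : (0:ℝ) < Real.sqrt (r2 t x) := Real.sqrt_pos.mpr hr2
  have hsq : Real.sqrt (r2 t x) * Real.sqrt (r2 t x) = r2 t x :=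
    Real.mul_self_sqrt hr2.le
  rw [Real.sin_two_mul, cos_phi, sin_phi, Real.sin_two_mul]
  have het : Real.exp t * Real.exp (-t) = 1 := by
    rw [← Real.exp_add]; simp
  field_simp
  linear_combination Real.sin x * Real.cos x * r2 t x * het -
    Real.sin x * Real.cos x * Real.sq_sqrt hr2.le

lemma strictMono_phi (t : ℝ) : StrictMono (phi t) := by
  apply strictMono_of_deriv_pos
  intro x
  rw [(hasDerivAt_phi t x).deriv]
  exact div_pos one_pos (r2_pos t x)

lemma continuous_phi (t : ℝ) : Continuous (phi t) :=
  continuous_iff_continuousAt.mpr fun x => (hasDerivAt_phi t x).continuousAt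

lemma phi_zero (t : ℝ) : phi t 0 = 0 := by
  simp [phi, If]

lemma phi_two_pi (t : ℝ) : phi t (2 * π) = 2 * π := by
  have h : Real.sin (2 * (2 * π)) = 0 := by
    have : (2 : ℝ) * (2 * π) = 2 * π + 2 * π := by ring
    rw [this, Real.sin_add_two_pi, Real.sin_two_pi]
  simp [phi, If, h]

lemma image_phi (t : ℝ) : phi t '' Set.Icc 0 (2 * π) = Set.Icc 0 (2 * π) := by
  have hπ : (0:ℝ) ≤ 2 * π := by positivity
  apply Set.Subset.antisymm
  · rintro y ⟨x, hx, rfl⟩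
    constructor
    · rw [← phi_zero t]; exact (strictMono_phi t).monotone hx.1
    · rw [← phi_two_pi t]; exact (strictMono_phi t).monotone hx.2
  · intro y hy
    have := intermediate_value_Icc hπ ((continuous_phi t).continuousOn
      (s := Set.Icc 0 (2 * π)))
    apply this
    rw [phi_zero, phi_two_pi]
    exact hy

end TInvAux

open TInvAux

/-- T-invariance of the distribution v ↦ ∫ v(x)|sin 2x|^{(-1-μ)/2} dx on the
principal series V_μ, realized on homogeneous functions of degree μ-1 on ℝ²\{0}.
The action of g_t = diag(e^t, e^{-t}) is f ↦ f ∘ g_t⁻¹ (the determinant is 1). -/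
theorem T_invariant_functional (μ : ℂ) (hμ : μ.re < 1)
    (f : (Fin 2 → ℝ) → ℂ)
    (hcont : ContinuousOn f {v | v ≠ 0})
    (hhom : ∀ a : ℝ, a ≠ 0 → ∀ v : Fin 2 → ℝ,
      f (a • v) = ((|a| : ℝ) : ℂ) ^ (μ - 1) * f v)
    (t : ℝ) :
    ∫ x in (0:ℝ)..(2 * π),
        f ![Real.exp (-t) * Real.cos x, Real.exp t * Real.sin x] *
          ((|Real.sin (2 * x)| : ℝ) : ℂ) ^ ((-1 - μ) / 2) =
    ∫ x in (0:ℝ)..(2 * π),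
        f ![Real.cos x, Real.sin x] *
          ((|Real.sin (2 * x)| : ℝ) : ℂ) ^ ((-1 - μ) / 2) := by
  have hπ : (0:ℝ) ≤ 2 * π := by positivity
  set z : ℂ := (-1 - μ) / 2 with hz
  set H : ℝ → ℂ := fun y => f ![Real.cos y, Real.sin y] *
    ((|Real.sin (2 * y)| : ℝ) : ℂ) ^ z with hH
  -- pointwise identity
  have key : ∀ x : ℝ,
      f ![Real.exp (-t) * Real.cos x, Real.exp t * Real.sin x] *
        ((|Real.sin (2 * x)| : ℝ) : ℂ) ^ z = |1 / r2 t x| • H (phi t x) := by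
    intro x
    have hr2 := r2_pos t x
    set a : ℝ := Real.sqrt (r2 t x) with ha
    have ha0 : 0 < a := Real.sqrt_pos.mpr hr2
    have ha2 : a ^ 2 = r2 t x := Real.sq_sqrt hr2.le
    -- the vector identity
    have hvec : (![Real.exp (-t) * Real.cos x, Real.exp t * Real.sin x] : Fin 2 → ℝ)
        = a • ![Real.cos (phi t x), Real.sin (phi t x)] := by
      funext i
      have hc := cos_phi t x
      have hsn := sin_phi t x
      rw [← ha] at hc hsn
      fin_cases i <;>
        simp only [Pi.smul_apply, Matrix.cons_val_zero, Matrix.cons_val_one, Matrix.head_cons,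
          smul_eq_mul, Fin.isValue, Matrix.cons_val', Matrix.empty_val', Matrix.cons_val_fin_one] <;>
        rw [hc, hsn] <;> simp <;> field_simp
    have hf : f ![Real.exp (-t) * Real.cos x, Real.exp t * Real.sin x]
        = ((a : ℝ) : ℂ) ^ (μ - 1) * f ![Real.cos (phi t x), Real.sin (phi t x)] := by
      rw [hvec, hhom a ha0.ne', abs_of_pos ha0]
    -- |sin 2x| = r2 * |sin 2φ|
    have habs : |Real.sin (2 * x)| = r2 t x * |Real.sin (2 * phi t x)| := by
      rw [sin_two_phi, abs_div, abs_of_pos hr2]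
      field_simp
    -- split the power
    have hsplit : ((|Real.sin (2 * x)| : ℝ) : ℂ) ^ z
        = ((r2 t x : ℝ) : ℂ) ^ z * ((|Real.sin (2 * phi t x)| : ℝ) : ℂ) ^ z := by
      rw [habs, Complex.ofReal_mul]
      exact Complex.mul_cpow_ofReal_nonneg hr2.le (abs_nonneg _) z
    -- combine powers: a^(μ-1) * (r2)^z = (r2)⁻¹
    have hpow : ((a : ℝ) : ℂ) ^ (μ - 1) * ((r2 t x : ℝ) : ℂ) ^ z
        = ((r2 t x : ℝ) : ℂ)⁻¹ := by
      have haC : ((a : ℝ) : ℂ) ≠ 0 := by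
        simpa using ha0.ne'
      have hr2C : ((r2 t x : ℝ) : ℂ) ≠ 0 := by
        simpa using hr2.ne'
      have hla : Complex.log ((a : ℝ) : ℂ) = (Real.log a : ℂ) :=
        (Complex.ofReal_log ha0.le).symm
      have hlr : Complex.log ((r2 t x : ℝ) : ℂ) = ((2 : ℝ) * Real.log a : ℂ) := by
        rw [← (Complex.ofReal_log hr2.le)]
        congr 1
        rw [← ha2, Real.log_pow]
        push_cast; ring
      rw [Complex.cpow_def_of_ne_zero haC, Complex.cpow_def_of_ne_zero hr2C,
        ← Complex.exp_add, hla, hlr]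
      have : (Real.log a : ℂ) * (μ - 1) + ((2 : ℝ) * Real.log a : ℂ) * z
          = -Complex.log ((r2 t x : ℝ) : ℂ) := by
        rw [hlr, hz]
        push_cast
        ring
      rw [this, Complex.exp_neg, Complex.exp_log hr2C]
    rw [hf, hsplit, hH]
    have hsm : |1 / r2 t x| • (f ![Real.cos (phi t x), Real.sin (phi t x)] *
        ((|Real.sin (2 * phi t x)| : ℝ) : ℂ) ^ z)
        = ((r2 t x : ℝ) : ℂ)⁻¹ * (f ![Real.cos (phi t x), Real.sin (phi t x)] *
        ((|Real.sin (2 * phi t x)| : ℝ) : ℂ) ^ z) := by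
      rw [abs_of_pos (div_pos one_pos hr2)]
      rw [Complex.real_smul]
      push_cast
      ring_nf
    rw [hsm, ← hpow]
    ring
  -- change of variables
  have hder : ∀ x ∈ Set.Icc (0:ℝ) (2 * π),
      HasDerivWithinAt (phi t) (1 / r2 t x) (Set.Icc (0:ℝ) (2 * π)) x :=
    fun x _ => (hasDerivAt_phi t x).hasDerivWithinAt
  have hinj : Set.InjOn (phi t) (Set.Icc (0:ℝ) (2 * π)) :=
    (strictMono_phi t).injective.injOn
  have hcov := MeasureTheory.integral_image_eq_integral_abs_deriv_smul
    measurableSet_Icc hder hinj H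
  rw [image_phi] at hcov
  rw [intervalIntegral.integral_of_le hπ, intervalIntegral.integral_of_le hπ,
    ← MeasureTheory.integral_Icc_eq_integral_Ioc, ← MeasureTheory.integral_Icc_eq_integral_Ioc]
  rw [hcov]
  exact setIntegral_congr_fun measurableSet_Icc fun x _ => key x
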